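/- Let G be a bipartite graph on {x_1,...,x_n} ∪ {y_1,...,y_n} satisfying: {x_i,y_i} ∈ E(G) for all i; if {x_i,y_j},{x_j,y_k} ∈ E(G) for distinct i,j,k then {x_i,y_k} ∈ E(G); and there is no pair i ≠ j with both {x_i,y_j} and {x_j,y_i} in E(G). Then there exists a permutation σ of [n] such that, after relabeling x_i ↦ x_{σ(i)}, y_i ↦ y_{σ(i)}, the graph satisfies: {x_i,y_i} ∈ E for all i; {x_i,y_j} ∈ E implies i ≤ j; and {x_i,y_j},{x_j,y_k} ∈ E with i < j < k implies {x_i,y_k} ∈ E. -/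

import Mathlib

/-- Type synonym for `Fin n` used to install a custom linear order. -/
def WrapFin (n : ℕ) := Fin n

/-- Any linear order relation on `Fin n` can be sorted by a permutation. -/
lemma exists_sorting_perm {n : ℕ} (s : Fin n → Fin n → Prop) (hs : IsLinearOrder (Fin n) s) :
    ∃ σ : Equiv.Perm (Fin n), ∀ i j, s (σ i) (σ j) ↔ i ≤ j := by
  letI L : LinearOrder (WrapFin n) :=
    { le := s
      le_refl := hs.refl
      le_trans := hs.trans
      le_antisymm := hs.antisymm
      le_total := hs.total
      toDecidableLE := fun a b => Classical.dec _ }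
  letI : Fintype (WrapFin n) := inferInstanceAs (Fintype (Fin n))
  have hc : Fintype.card (WrapFin n) = n := Fintype.card_fin n
  let e := monoEquivOfFin (WrapFin n) hc
  refine ⟨⟨fun i => (e i : Fin n), fun i => e.symm i, fun i => e.symm_apply_apply i,
    fun i => e.apply_symm_apply i⟩, fun i j => ?_⟩
  exact e.le_iff_le (x := i) (y := j)

/-- a bipartite graph satisfying Villarreal's conditions with no `K_{2,2}`
can be relabeled to satisfy the Herzog–Hibi conditions. -/
theorem stmt3 (n : ℕ) (E : Fin n → Fin n → Prop)
    (hrefl : ∀ i, E i i)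
    (htrans : ∀ i j k : Fin n, i ≠ j → j ≠ k → i ≠ k → E i j → E j k → E i k)
    (hanti : ∀ i j : Fin n, i ≠ j → ¬(E i j ∧ E j i)) :
    ∃ σ : Equiv.Perm (Fin n),
      (∀ i, E (σ i) (σ i)) ∧
      (∀ i j : Fin n, E (σ i) (σ j) → i ≤ j) ∧
      (∀ i j k : Fin n, i < j → j < k → E (σ i) (σ j) → E (σ j) (σ k) → E (σ i) (σ k)) := by
  haveI hpo : IsPartialOrder (Fin n) E :=
    { refl := hrefl
      trans := by
        intro i j k hij hjk
        by_cases h1 : i = j; · subst h1; exact hjk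
        by_cases h2 : j = k; · subst h2; exact hij
        by_cases h3 : i = k; · subst h3; exact hrefl i
        exact htrans i j k h1 h2 h3 hij hjk
      antisymm := by
        intro i j hij hji
        by_contra h
        exact hanti i j h ⟨hij, hji⟩ }
  obtain ⟨s, hlin, hle⟩ := extend_partialOrder E
  obtain ⟨σ, hσ⟩ := exists_sorting_perm s hlin
  refine ⟨σ, fun i => hrefl _, fun i j h => (hσ i j).mp (hle _ _ h), ?_⟩
  intro i j k hij hjk h1 h2
  exact htrans _ _ _ (fun h => hij.ne (σ.injective h)) (fun h => hjk.ne (σ.injective h))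
    (fun h => (hij.trans hjk).ne (σ.injective h)) h1 h2
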